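/- For |q|<1 and |z|<1: (z;q)_∞ Σ_{n≥0} z^n / ((q;q)_n (yq;q)_n) = Σ_{n≥0} y^n z^n q^{n²} / ((yq;q)_n (q;q)_n). -/

import Mathlib

open scoped BigOperators

open Finset
namespace HeineAux

lemma one_sub_ne (w : ℂ) (hw : ‖w‖ < 1) : (1 : ℂ) - w ≠ 0 := by
  intro h
  have h1 : (1:ℂ) = w := by linear_combination h
  rw [← h1] at hw; simp at hw

lemma norm_one_sub_ge (w : ℂ) : 1 - ‖w‖ ≤ ‖(1:ℂ) - w‖ := by
  calc 1 - ‖w‖ = ‖(1:ℂ)‖ - ‖w‖ := by simp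
  _ ≤ ‖(1:ℂ) - w‖ := norm_sub_norm_le _ _

lemma abs_log_one_sub_le {x r : ℝ} (hx0 : 0 ≤ x) (hxr : x ≤ r) (hr : r < 1) :
    |Real.log (1 - x)| ≤ x / (1 - r) := by
  have hx1 : x < 1 := lt_of_le_of_lt hxr hr
  have h1x : 0 < 1 - x := by linarith
  have hneg : Real.log (1 - x) ≤ 0 := Real.log_nonpos (by linarith) (by linarith)
  rw [abs_of_nonpos hneg, ← Real.log_inv]
  have := Real.log_le_sub_one_of_pos (x := (1-x)⁻¹) (by positivity)
  have h2 : (1-x)⁻¹ - 1 = x / (1-x) := by field_simp; ring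
  refine le_trans (this.trans (le_of_eq h2)) ?_
  apply div_le_div_of_nonneg_left hx0 (by linarith) (by linarith)

lemma summable_log_one_sub (r : ℝ) (hr0 : 0 ≤ r) (hr : r < 1) :
    Summable fun j : ℕ => Real.log (1 - r ^ (j + 1)) := by
  apply Summable.of_norm_bounded (g := fun j => (r ^ (j+1)) / (1 - r))
  · have : Summable fun j : ℕ => r ^ j := summable_geometric_of_lt_one hr0 hr
    simpa [pow_succ', div_eq_mul_inv, mul_assoc] using (this.mul_left (r * (1 - r)⁻¹)).congr
      (fun j => by ring)
  · intro j
    exact abs_log_one_sub_le (pow_nonneg hr0 _)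
      (le_trans (pow_le_pow_of_le_one hr0 hr.le (Nat.one_le_iff_ne_zero.2 (Nat.succ_ne_zero j)))
        (pow_one r).le) hr

noncomputable def D (q : ℂ) : ℝ := Real.exp (∑' j : ℕ, Real.log (1 - ‖q‖ ^ (j + 1)))

variable {q : ℂ}

lemma D_pos (q : ℂ) : 0 < D q := Real.exp_pos _

lemma pow_succ_lt_one (hq : ‖q‖ < 1) (j : ℕ) : ‖q‖ ^ (j+1) < 1 :=
  pow_lt_one₀ (norm_nonneg q) hq (Nat.succ_ne_zero j)

lemma D_le_prod (hq : ‖q‖ < 1) (n : ℕ) :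
    D q ≤ ∏ j ∈ range n, (1 - ‖q‖ ^ (j + 1)) := by
  have hsum := summable_log_one_sub ‖q‖ (norm_nonneg q) hq
  have hpos : ∀ j : ℕ, (0:ℝ) < 1 - ‖q‖ ^ (j+1) := fun j => by
    have := pow_succ_lt_one hq j; linarith
  have hprod : ∏ j ∈ range n, (1 - ‖q‖ ^ (j + 1)) =
      Real.exp (∑ j ∈ range n, Real.log (1 - ‖q‖ ^ (j + 1))) := by
    rw [Real.exp_sum]
    exact (prod_congr rfl fun j _ => (Real.exp_log (hpos j)).symm)
  rw [hprod, D]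
  apply Real.exp_le_exp.2
  have htail := (hsum.sum_add_tsum_nat_add n).symm
  rw [htail]
  have : (∑' j : ℕ, Real.log (1 - ‖q‖ ^ (j + n + 1))) ≤ 0 := by
    apply tsum_nonpos
    intro j
    exact Real.log_nonpos (by have := hpos (j+n); linarith)
      (by have := hpos (j+n); nlinarith [pow_nonneg (norm_nonneg q) (j+n+1)])
  linarith

lemma D_le_norm_prod (hq : ‖q‖ < 1) {x : ℂ} (hx : ‖x‖ ≤ 1) (n : ℕ) :
    D q ≤ ‖∏ j ∈ range n, (1 - x * q ^ (j + 1))‖ := by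
  refine le_trans (D_le_prod hq n) ?_
  rw [norm_prod]
  apply prod_le_prod
  · intro j _; have := pow_succ_lt_one hq j; linarith
  · intro j _
    refine le_trans ?_ (norm_one_sub_ge _)
    have hnx : ‖x * q ^ (j+1)‖ ≤ ‖q‖ ^ (j+1) := by
      rw [norm_mul, norm_pow]
      nlinarith [norm_nonneg x, pow_nonneg (norm_nonneg q) (j+1), pow_succ_lt_one hq j]
    linarith

lemma prod_x_ne_zero (hq : ‖q‖ < 1) {x : ℂ} (hx : ‖x‖ ≤ 1) (n : ℕ) :
    ∏ j ∈ range n, (1 - x * q ^ (j + 1)) ≠ 0 := by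
  intro h
  have h2 := D_le_norm_prod hq hx n
  rw [h] at h2; simp at h2
  exact absurd h2 (not_le.2 (D_pos q))

noncomputable def Pq (q : ℂ) (n : ℕ) : ℂ := ∏ j ∈ range n, (1 - q ^ (j + 1))

def e : ℕ → ℕ
  | 0 => 0
  | (k+1) => e k + k

lemma e_succ (k : ℕ) : e (k + 1) = e k + k := rfl

lemma e_add (j m : ℕ) : e (j + m) = e j + e m + j * m := by
  induction m with
  | zero => simp [e]
  | succ m ih =>
      have h : j + (m+1) = (j+m) + 1 := by ring
      rw [h, e_succ, ih, e_succ]; ring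

noncomputable def a (q : ℂ) (k : ℕ) : ℂ := (-1) ^ k * q ^ (e k) / Pq q k

lemma Pq_succ (n : ℕ) : Pq q (n + 1) = Pq q n * (1 - q ^ (n + 1)) := prod_range_succ _ _

lemma one_sub_pow_ne (hq : ‖q‖ < 1) (n : ℕ) : (1 : ℂ) - q ^ (n+1) ≠ 0 := by
  apply one_sub_ne
  rw [norm_pow]
  exact pow_lt_one₀ (norm_nonneg q) hq (Nat.succ_ne_zero n)

lemma Pq_eq_prod_x (n : ℕ) : Pq q n = ∏ j ∈ range n, (1 - (1:ℂ) * q ^ (j + 1)) := by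
  simp [Pq]

lemma Pq_ne_zero (hq : ‖q‖ < 1) (n : ℕ) : Pq q n ≠ 0 := by
  rw [Pq_eq_prod_x]
  exact prod_x_ne_zero hq (by norm_num) n

lemma D_le_norm_Pq (hq : ‖q‖ < 1) (n : ℕ) : D q ≤ ‖Pq q n‖ := by
  rw [Pq_eq_prod_x]
  exact D_le_norm_prod hq (by norm_num) n

lemma a_zero : a q 0 = 1 := by simp [a, Pq, e]

lemma a_succ (hq : ‖q‖ < 1) (k : ℕ) :
    a q (k + 1) = -(a q k) * q ^ k / (1 - q ^ (k + 1)) := by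
  rw [a, a, Pq_succ, e_succ, pow_add]
  field_simp [Pq_ne_zero hq k, one_sub_pow_ne hq k]
  ring

lemma summable_norm_a_mul_pow (hq : ‖q‖ < 1) (w : ℂ) :
    Summable fun k : ℕ => ‖a q k * w ^ k‖ := by
  apply summable_of_ratio_norm_eventually_le (r := 1/2) (by norm_num)
  have hq1 : (0:ℝ) < 1 - ‖q‖ := by linarith
  have hten : Filter.Tendsto (fun k : ℕ => ‖q‖ ^ k * ‖w‖ / (1 - ‖q‖)) Filter.atTop (nhds 0) := by
    have := tendsto_pow_atTop_nhds_zero_of_lt_one (norm_nonneg q) hq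
    simpa using (this.mul_const ‖w‖).div_const (1 - ‖q‖)
  have hev := hten.eventually_le_const (show (0:ℝ) < 1/2 by norm_num)
  filter_upwards [hev] with k hk
  have hfe : a q (k+1) * w ^ (k+1) = (a q k * w ^ k) * (-(q ^ k * w) / (1 - q ^ (k+1))) := by
    rw [a_succ hq k, pow_succ]
    field_simp [one_sub_pow_ne hq k]
    ring
  have hden : 1 - ‖q‖ ≤ ‖(1 : ℂ) - q ^ (k+1)‖ := by
    refine le_trans ?_ (norm_one_sub_ge _)
    rw [norm_pow]
    have h1 : ‖q‖ ^ (k+1) ≤ ‖q‖ := pow_le_of_le_one (norm_nonneg q) hq.le (Nat.succ_ne_zero k)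
    linarith
  have hratio : ‖-(q ^ k * w) / (1 - q ^ (k+1))‖ ≤ 1/2 := by
    rw [norm_div, norm_neg, norm_mul, norm_pow]
    rw [div_le_iff₀ (lt_of_lt_of_le hq1 hden)]
    rw [div_le_iff₀ hq1] at hk
    nlinarith [norm_nonneg w, pow_nonneg (norm_nonneg q) k]
  rw [norm_norm, norm_norm, hfe, norm_mul]
  calc ‖a q k * w ^ k‖ * ‖-(q ^ k * w) / (1 - q ^ (k+1))‖
      ≤ ‖a q k * w ^ k‖ * (1/2) := by
        exact mul_le_mul_of_nonneg_left hratio (norm_nonneg _)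
  _ = 1/2 * ‖a q k * w ^ k‖ := by ring

lemma summable_a_mul_pow (hq : ‖q‖ < 1) (w : ℂ) :
    Summable fun k : ℕ => a q k * w ^ k :=
  (summable_norm_a_mul_pow hq w).of_norm

end HeineAux

namespace HeineAux

noncomputable def S (q w : ℂ) : ℂ := ∑' k : ℕ, a q k * w ^ k

variable {q : ℂ}

lemma S_funext (hq : ‖q‖ < 1) (w : ℂ) : S q w = (1 - w) * S q (q * w) := by
  have h1 : Summable fun k : ℕ => a q k * w ^ k := summable_a_mul_pow hq w
  have h2 : Summable fun k : ℕ => a q k * (q * w) ^ k := summable_a_mul_pow hq (q * w)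
  have key : S q w - S q (q * w) = -w * S q (q * w) := by
    have hsub : S q w - S q (q * w) = ∑' k : ℕ, (a q k * w ^ k - a q k * (q * w) ^ k) :=
      (Summable.tsum_sub h1 h2).symm
    rw [hsub]
    have hsummable : Summable fun k : ℕ => a q k * w ^ k - a q k * (q * w) ^ k := h1.sub h2
    rw [Summable.tsum_eq_zero_add hsummable]
    have h0 : a q 0 * w ^ 0 - a q 0 * (q * w) ^ 0 = 0 := by simp
    rw [h0, zero_add]
    have hterm : ∀ k : ℕ, a q (k+1) * w ^ (k+1) - a q (k+1) * (q * w) ^ (k+1)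
        = -w * (a q k * (q * w) ^ k) := by
      intro k
      have hne := one_sub_pow_ne hq k
      rw [a_succ hq k]
      field_simp
      ring
    rw [tsum_congr hterm, tsum_mul_left]
    rfl
  linear_combination key

end HeineAux

namespace HeineAux

variable {q : ℂ}

lemma S_iterate (hq : ‖q‖ < 1) (z : ℂ) (N : ℕ) :
    S q z = (∏ j ∈ range N, (1 - z * q ^ j)) * S q (q ^ N * z) := by
  induction N with
  | zero => simp
  | succ N ih =>
      calc S q z = (∏ j ∈ range N, (1 - z * q ^ j)) * S q (q ^ N * z) := ih
      _ = (∏ j ∈ range N, (1 - z * q ^ j)) * ((1 - q ^ N * z) * S q (q * (q ^ N * z))) := by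
          rw [← S_funext hq (q ^ N * z)]
      _ = (∏ j ∈ range (N+1), (1 - z * q ^ j)) * S q (q ^ (N+1) * z) := by
          rw [prod_range_succ, show q * (q ^ N * z) = q ^ (N+1) * z by ring]
          ring

lemma S_tendsto_one (hq : ‖q‖ < 1) (z : ℂ) (hz : ‖z‖ ≤ 1) :
    Filter.Tendsto (fun N : ℕ => S q (q ^ N * z)) Filter.atTop (nhds 1) := by
  have hbound : ∀ N : ℕ, ‖S q (q ^ N * z) - 1‖ ≤ ‖q‖ ^ N * (∑' k : ℕ, ‖a q (k+1) * z ^ (k+1)‖) := by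
    intro N
    have hsum := summable_a_mul_pow hq (q ^ N * z)
    have h1 : S q (q ^ N * z) - 1 = ∑' k : ℕ, a q (k+1) * (q ^ N * z) ^ (k+1) := by
      rw [S, Summable.tsum_eq_zero_add hsum, a_zero]
      simp
    rw [h1]
    have hnorm := summable_norm_a_mul_pow hq (q ^ N * z)
    have hnorm' : Summable fun k : ℕ => ‖a q (k+1) * (q ^ N * z) ^ (k+1)‖ :=
      ((summable_nat_add_iff (f := fun n : ℕ => ‖a q n * (q ^ N * z) ^ n‖) 1).2 hnorm)
    refine le_trans (norm_tsum_le_tsum_norm hnorm') ?_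
    have hz1 : Summable fun k : ℕ => ‖a q (k+1) * z ^ (k+1)‖ :=
      ((summable_nat_add_iff (f := fun n : ℕ => ‖a q n * z ^ n‖) 1).2
        (summable_norm_a_mul_pow hq z))
    have hle : ∀ k : ℕ, ‖a q (k+1) * (q ^ N * z) ^ (k+1)‖ ≤ ‖q‖ ^ N * ‖a q (k+1) * z ^ (k+1)‖ := by
      intro k
      rw [mul_pow, norm_mul, norm_mul, norm_mul, norm_pow, norm_pow, norm_pow]
      have h2 : ‖q‖ ^ (N * (k+1)) ≤ ‖q‖ ^ N :=
        pow_le_pow_of_le_one (norm_nonneg q) hq.le (Nat.le_mul_of_pos_right N (Nat.succ_pos k))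
      calc ‖a q (k+1)‖ * ((‖q‖ ^ N) ^ (k+1) * ‖z‖ ^ (k+1))
          = ‖q‖ ^ (N * (k+1)) * (‖a q (k+1)‖ * ‖z‖ ^ (k+1)) := by rw [← pow_mul]; ring
        _ ≤ ‖q‖ ^ N * (‖a q (k+1)‖ * ‖z‖ ^ (k+1)) := by
            apply mul_le_mul_of_nonneg_right h2 (by positivity)
    refine le_trans (Summable.tsum_le_tsum hle hnorm' (hz1.mul_left _)) ?_
    rw [tsum_mul_left]
  have hq0 : Filter.Tendsto (fun N : ℕ => ‖q‖ ^ N * (∑' k : ℕ, ‖a q (k+1) * z ^ (k+1)‖))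
      Filter.atTop (nhds 0) := by
    have := tendsto_pow_atTop_nhds_zero_of_lt_one (norm_nonneg q) hq
    simpa using this.mul_const _
  rw [← tendsto_sub_nhds_zero_iff]
  apply squeeze_zero_norm hbound hq0

lemma hasProd_one_sub (hq : ‖q‖ < 1) (z : ℂ) (hz : ‖z‖ < 1) :
    HasProd (fun j : ℕ => 1 - z * q ^ j) (∏' j : ℕ, (1 - z * q ^ j)) := by
  have hne : ∀ (x : Unit) (j : ℕ), (fun j (_ : Unit) => (1:ℂ) - z * q ^ j) j x ≠ 0 := by
    intro _ j
    apply one_sub_ne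
    rw [norm_mul, norm_pow]
    calc ‖z‖ * ‖q‖ ^ j ≤ ‖z‖ * 1 :=
          mul_le_mul_of_nonneg_left (pow_le_one₀ (norm_nonneg q) hq.le) (norm_nonneg z)
      _ < 1 := by simpa using hz
  have h0 : Filter.Tendsto (fun j : ℕ => ‖z‖ * ‖q‖ ^ j) Filter.atTop (nhds 0) := by
    simpa using (tendsto_pow_atTop_nhds_zero_of_lt_one (norm_nonneg q) hq).const_mul ‖z‖
  have hev := h0.eventually_le_const (show (0:ℝ) < 1/2 by norm_num)
  have hlog : Summable fun j : ℕ => Complex.log (1 - z * q ^ j) := by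
    apply Summable.of_norm_bounded_eventually (g := fun j => 3/2 * (‖z‖ * ‖q‖ ^ j))
    · exact ((summable_geometric_of_lt_one (norm_nonneg q) hq).mul_left ‖z‖).mul_left (3/2)
    · rw [Nat.cofinite_eq_atTop]
      filter_upwards [hev] with j hj
      have hrw : (1 : ℂ) - z * q ^ j = 1 + -(z * q ^ j) := by ring
      rw [hrw]
      have hhalf : ‖-(z * q ^ j)‖ ≤ 1/2 := by
        rw [norm_neg, norm_mul, norm_pow]; exact hj
      refine le_trans (Complex.norm_log_one_add_half_le_self hhalf) ?_
      rw [norm_neg, norm_mul, norm_pow]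
  exact (Complex.hasProd_of_hasSum_log (fun j => hne () j) hlog.hasSum).multipliable.hasProd

/-- Euler's identity -/
lemma euler (hq : ‖q‖ < 1) (z : ℂ) (hz : ‖z‖ < 1) :
    (∏' j : ℕ, (1 - z * q ^ j)) = S q z := by
  have h1 := (hasProd_one_sub hq z hz).tendsto_prod_nat
  have h2 := S_tendsto_one hq z hz.le
  have h3 : Filter.Tendsto (fun N : ℕ => (∏ j ∈ range N, (1 - z * q ^ j)) * S q (q ^ N * z))
      Filter.atTop (nhds ((∏' j : ℕ, (1 - z * q ^ j)) * 1)) := h1.mul h2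
  have h4 : (fun N : ℕ => (∏ j ∈ range N, (1 - z * q ^ j)) * S q (q ^ N * z))
      = fun _ => S q z := by
    funext N; exact (S_iterate hq z N).symm
  rw [h4] at h3
  have := tendsto_nhds_unique h3 tendsto_const_nhds
  rw [← this, mul_one]

end HeineAux

namespace HeineAux

variable {q : ℂ}

noncomputable def B (q : ℂ) (N k : ℕ) : ℂ :=
  if k ≤ N then Pq q N / (Pq q k * Pq q (N - k)) else 0

lemma Pq_zero : Pq q 0 = 1 := by simp [Pq]

lemma B_zero (hq : ‖q‖ < 1) (N : ℕ) : B q N 0 = 1 := by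
  rw [B, if_pos (Nat.zero_le N)]
  simp [Pq_zero, div_self (Pq_ne_zero hq N)]

lemma B_self (hq : ‖q‖ < 1) (N : ℕ) : B q N N = 1 := by
  rw [B, if_pos (le_refl N)]
  simp [Pq_zero, div_self (Pq_ne_zero hq N)]

lemma B_eq_zero {N k : ℕ} (h : N < k) : B q N k = 0 := by
  rw [B, if_neg (not_le.2 h)]

lemma B_pascal (hq : ‖q‖ < 1) {M k : ℕ} (hk : k ≤ M) :
    B q (M+1) (k+1) = B q M (k+1) + q ^ (M - k) * B q M k := by
  rcases eq_or_lt_of_le hk with rfl | hlt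
  · rw [B_self hq, B_eq_zero (Nat.lt_succ_self k), B_self hq]
    simp
  · obtain ⟨m, rfl⟩ : ∃ m, M = k + m + 1 := ⟨M - k - 1, by omega⟩
    have h1 : k + m + 1 + 1 - (k + 1) = m + 1 := by omega
    have h2 : k + m + 1 - (k + 1) = m := by omega
    have h3 : k + m + 1 - k = m + 1 := by omega
    rw [B, B, B, if_pos (by omega), if_pos (by omega), if_pos (by omega), h1, h2, h3]
    have e1 : Pq q (k + m + 1 + 1) = Pq q (k + m + 1) * (1 - q ^ (k+1) * q ^ (m+1)) := by
      rw [Pq_succ, ← pow_add]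
      congr 3
      omega
    have e2 : Pq q (k+1) = Pq q k * (1 - q ^ (k+1)) := Pq_succ k
    have e3 : Pq q (m+1) = Pq q m * (1 - q ^ (m+1)) := Pq_succ m
    rw [e1, e2, e3]
    have n1 := Pq_ne_zero hq k
    have n2 := Pq_ne_zero hq m
    have n3 := Pq_ne_zero hq (k+m+1)
    have n4 := one_sub_pow_ne hq k
    have n5 := one_sub_pow_ne hq m
    field_simp
    ring

/-- finite q-binomial theorem -/
lemma fqb (hq : ‖q‖ < 1) (x : ℂ) (M : ℕ) :
    ∏ j ∈ range M, (1 - x * q ^ j)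
      = ∑ k ∈ range (M+1), (-1) ^ k * q ^ (e k) * B q M k * x ^ k := by
  induction M with
  | zero => simp [B_zero hq, e]
  | succ M ih =>
      have hsplit : ∑ k ∈ range (M+2), (-1) ^ k * q ^ (e k) * B q (M+1) k * x ^ k
          = (∑ k ∈ range (M+1), (-1) ^ (k+1) * q ^ (e (k+1)) * B q (M+1) (k+1) * x ^ (k+1))
            + (-1) ^ 0 * q ^ (e 0) * B q (M+1) 0 * x ^ 0 :=
        Finset.sum_range_succ' _ (M+1)
      have hpascal : ∀ k ∈ range (M+1),
          (-1 : ℂ) ^ (k+1) * q ^ (e (k+1)) * B q (M+1) (k+1) * x ^ (k+1)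
          = (-1) ^ (k+1) * q ^ (e (k+1)) * B q M (k+1) * x ^ (k+1)
            - (x * q ^ M) * ((-1) ^ k * q ^ (e k) * B q M k * x ^ k) := by
        intro k hk
        have hkM : k ≤ M := Nat.lt_succ_iff.1 (mem_range.1 hk)
        rw [B_pascal hq hkM]
        have hex : q ^ (e (k+1)) * q ^ (M - k) = q ^ (e k) * q ^ M := by
          rw [← pow_add, ← pow_add, e_succ]
          congr 1
          omega
        linear_combination ((-1:ℂ) ^ (k+1) * B q M k * x ^ (k+1)) * hex
      have hsum1 : ∑ k ∈ range (M+1), (-1:ℂ) ^ (k+1) * q ^ (e (k+1)) * B q M (k+1) * x ^ (k+1)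
          = (∑ k ∈ range (M+1), (-1) ^ k * q ^ (e k) * B q M k * x ^ k)
            - (-1) ^ 0 * q ^ (e 0) * B q M 0 * x ^ 0 := by
        have h1 : ∑ k ∈ range (M+2), (-1:ℂ) ^ k * q ^ (e k) * B q M k * x ^ k
            = (∑ k ∈ range (M+1), (-1) ^ (k+1) * q ^ (e (k+1)) * B q M (k+1) * x ^ (k+1))
              + (-1) ^ 0 * q ^ (e 0) * B q M 0 * x ^ 0 := Finset.sum_range_succ' _ (M+1)
        have h2 : ∑ k ∈ range (M+2), (-1:ℂ) ^ k * q ^ (e k) * B q M k * x ^ k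
            = (∑ k ∈ range (M+1), (-1) ^ k * q ^ (e k) * B q M k * x ^ k) := by
          rw [Finset.sum_range_succ, B_eq_zero (Nat.lt_succ_self M)]
          simp
        rw [← h2, h1]
        ring
      rw [prod_range_succ, ih, hsplit, Finset.sum_congr rfl hpascal, Finset.sum_sub_distrib,
        hsum1, B_zero hq, B_zero hq, ← Finset.mul_sum]
      ring

end HeineAux

namespace HeineAux

variable {q y : ℂ}

lemma B_trinomial (hq : ‖q‖ < 1) {N k j : ℕ} (hjk : j ≤ k) (hkN : k ≤ N) :
    B q N k * B q k j = B q N j * B q (N - j) (k - j) := by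
  obtain ⟨s, rfl⟩ : ∃ s, k = j + s := ⟨k - j, by omega⟩
  obtain ⟨t, rfl⟩ : ∃ t, N = j + s + t := ⟨N - (j+s), by omega⟩
  rw [B, B, B, B, if_pos (by omega), if_pos (by omega), if_pos (by omega), if_pos (by omega),
    show j + s + t - (j + s) = t by omega, show j + s - j = s by omega,
    show j + s + t - j = s + t by omega, show s + t - s = t by omega]
  have n1 := Pq_ne_zero hq j
  have n2 := Pq_ne_zero hq s
  have n3 := Pq_ne_zero hq t
  have n4 := Pq_ne_zero hq (j+s)
  have n5 := Pq_ne_zero hq (s+t)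
  have n6 := Pq_ne_zero hq (j+s+t)
  field_simp

lemma two_e (N : ℕ) : 2 * e N + N = N ^ 2 := by
  induction N with
  | zero => simp [e]
  | succ N ih => rw [e_succ]; ring_nf; ring_nf at ih; omega

/-- the inner alternating sum vanishes unless M = 0 -/
lemma alt_sum (hq : ‖q‖ < 1) (M : ℕ) :
    ∑ m ∈ range (M+1), (-1:ℂ) ^ m * q ^ (e m) * B q M m = if M = 0 then 1 else 0 := by
  have h := fqb hq 1 M
  simp only [one_pow, mul_one] at h
  rw [← h]
  rcases Nat.eq_zero_or_pos M with rfl | hM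
  · simp
  · rw [if_neg (Nat.pos_iff_ne_zero.1 hM)]
    apply Finset.prod_eq_zero (mem_range.2 hM)
    simp

/-- key finite identity -/
lemma key_id (hq : ‖q‖ < 1) (y : ℂ) (N : ℕ) :
    ∑ k ∈ range (N+1), (-1:ℂ) ^ k * q ^ (e k) * B q N k *
      (∏ i ∈ range k, (1 - y * q ^ (N - k + 1 + i))) = y ^ N * q ^ (N ^ 2) := by
  -- expand the inner product by the finite q-binomial theorem
  have hT : ∀ k ∈ range (N+1), (∏ i ∈ range k, (1 - y * q ^ (N - k + 1 + i)))
      = ∑ j ∈ range (k+1), (-1:ℂ) ^ j * q ^ (e j) * B q k j * y ^ j * q ^ ((N - k + 1) * j) := by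
    intro k hk
    have h1 : (∏ i ∈ range k, (1 - y * q ^ (N - k + 1 + i)))
        = ∏ i ∈ range k, (1 - (y * q ^ (N - k + 1)) * q ^ i) := by
      refine prod_congr rfl fun i _ => ?_
      rw [mul_assoc, ← pow_add]
    rw [h1, fqb hq (y * q ^ (N - k + 1)) k]
    refine Finset.sum_congr rfl fun j _ => ?_
    rw [mul_pow, ← pow_mul]
    ring
  rw [Finset.sum_congr rfl (fun k hk => by rw [hT k hk, Finset.mul_sum])]
  -- now a double sum; swap it
  have hswap : ∑ k ∈ range (N+1), ∑ j ∈ range (k+1),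
        (-1:ℂ) ^ k * q ^ (e k) * B q N k * ((-1:ℂ) ^ j * q ^ (e j) * B q k j * y ^ j * q ^ ((N - k + 1) * j))
      = ∑ j ∈ range (N+1), ∑ k ∈ Finset.Ico j (N+1),
        (-1:ℂ) ^ k * q ^ (e k) * B q N k * ((-1:ℂ) ^ j * q ^ (e j) * B q k j * y ^ j * q ^ ((N - k + 1) * j)) := by
    rw [Finset.range_eq_Ico, Finset.sum_Ico_Ico_comm]; simp only [Finset.range_eq_Ico]
  rw [hswap]
  -- inner sum evaluates via the vanishing lemma
  have hinner : ∀ j ∈ range (N+1), ∑ k ∈ Finset.Ico j (N+1),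
        (-1:ℂ) ^ k * q ^ (e k) * B q N k * ((-1:ℂ) ^ j * q ^ (e j) * B q k j * y ^ j * q ^ ((N - k + 1) * j))
      = y ^ j * B q N j * q ^ (2 * e j + (N - j + 1) * j) * (if N - j = 0 then 1 else 0) := by
    intro j hj
    have hjN : j ≤ N := Nat.lt_succ_iff.1 (mem_range.1 hj)
    rw [Finset.sum_Ico_eq_sum_range]
    have hterm : ∀ m ∈ range (N + 1 - j),
        (-1:ℂ) ^ (j+m) * q ^ (e (j+m)) * B q N (j+m) * ((-1:ℂ) ^ j * q ^ (e j) * B q (j+m) j * y ^ j * q ^ ((N - (j+m) + 1) * j))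
        = y ^ j * B q N j * q ^ (2 * e j + (N - j + 1) * j) * ((-1:ℂ) ^ m * q ^ (e m) * B q (N-j) m) := by
      intro m hm
      have hmNj : m ≤ N - j := by
        have := mem_range.1 hm; omega
      have htri := B_trinomial hq (Nat.le_add_right j m) (show j + m ≤ N by omega)
      rw [show j + m - j = m by omega] at htri
      have hsign : (-1:ℂ) ^ (j+m) * (-1:ℂ) ^ j = (-1:ℂ) ^ m := by
        rw [← pow_add, show j + m + j = 2*j + m by omega, pow_add, pow_mul]
        simp
      have hexp : e (j+m) + e j + (N - (j+m) + 1) * j = (2 * e j + (N - j + 1) * j) + e m := by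
        rw [e_add]
        have h5 : (N - (j+m) + 1) * j + m * j = (N - j + 1) * j := by
          rw [← add_mul]
          congr 1
          omega
        rw [Nat.mul_comm j m]
        omega
      calc (-1:ℂ) ^ (j+m) * q ^ (e (j+m)) * B q N (j+m) * ((-1:ℂ) ^ j * q ^ (e j) * B q (j+m) j * y ^ j * q ^ ((N - (j+m) + 1) * j))
          = ((-1:ℂ) ^ (j+m) * (-1:ℂ) ^ j) * (q ^ (e (j+m)) * q ^ (e j) * q ^ ((N - (j+m) + 1) * j)) * (B q N (j+m) * B q (j+m) j) * y ^ j := by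
            ring
        _ = (-1:ℂ) ^ m * q ^ ((2 * e j + (N - j + 1) * j) + e m) * (B q N j * B q (N-j) m) * y ^ j := by
            rw [hsign, htri, ← pow_add, ← pow_add, hexp]
        _ = y ^ j * B q N j * q ^ (2 * e j + (N - j + 1) * j) * ((-1:ℂ) ^ m * q ^ (e m) * B q (N-j) m) := by
            rw [pow_add]; ring
    rw [Finset.sum_congr rfl hterm, ← Finset.mul_sum,
      show N + 1 - j = (N - j) + 1 by omega, alt_sum hq (N - j)]
  rw [Finset.sum_congr rfl hinner]
  -- only j = N survives
  rw [Finset.sum_eq_single N]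
  · rw [if_pos (by omega), B_self hq]
    rw [show 2 * e N + (N - N + 1) * N = N ^ 2 by rw [Nat.sub_self, zero_add, one_mul, two_e]]
    ring
  · intro j hj hjne
    rw [if_neg (by have := mem_range.1 hj; omega)]
    ring
  · intro h
    exact absurd (mem_range.2 (Nat.lt_succ_self N)) h

end HeineAux

namespace HeineAux

variable {q y z : ℂ}

noncomputable def Py (q y : ℂ) (n : ℕ) : ℂ := ∏ j ∈ range n, (1 - y * q ^ (j + 1))

lemma Py_ne_zero (hq : ‖q‖ < 1) (hy : ‖y‖ ≤ 1) (n : ℕ) : Py q y n ≠ 0 :=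
  prod_x_ne_zero hq hy n

lemma D_le_norm_Py (hq : ‖q‖ < 1) (hy : ‖y‖ ≤ 1) (n : ℕ) : D q ≤ ‖Py q y n‖ :=
  D_le_norm_prod hq hy n

lemma B_ne_zero (hq : ‖q‖ < 1) {N k : ℕ} (hk : k ≤ N) : B q N k ≠ 0 := by
  rw [B, if_pos hk]
  exact div_ne_zero (Pq_ne_zero hq N) (mul_ne_zero (Pq_ne_zero hq k) (Pq_ne_zero hq (N-k)))

lemma T_ne_zero (hq : ‖q‖ < 1) (hy : ‖y‖ ≤ 1) (N k : ℕ) :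
    (∏ i ∈ range k, (1 - y * q ^ (N - k + 1 + i))) ≠ 0 := by
  rw [Finset.prod_ne_zero_iff]
  intro i _
  apply one_sub_ne
  rw [norm_mul, norm_pow]
  have h1 : ‖q‖ ^ (N - k + 1 + i) ≤ ‖q‖ ^ (0 + 1 + 0) := by
    apply pow_le_pow_of_le_one (norm_nonneg q) hq.le
    omega
  simp only [pow_one, zero_add, add_zero] at h1
  nlinarith [norm_nonneg y, norm_nonneg q, pow_nonneg (norm_nonneg q) (N - k + 1 + i)]

lemma Py_split (m k : ℕ) : Py q y (m + k) = Py q y m * ∏ i ∈ range k, (1 - y * q ^ (m + 1 + i)) := by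
  rw [Py, Py, prod_range_add]
  congr 1
  refine prod_congr rfl fun i _ => ?_
  have h : m + i + 1 = m + 1 + i := by omega
  rw [h]

lemma conv (hq : ‖q‖ < 1) (hy : ‖y‖ ≤ 1) (z : ℂ) (N : ℕ) :
    ∑ kl ∈ Finset.HasAntidiagonal.antidiagonal N, (a q kl.1 * z ^ kl.1) * (z ^ kl.2 / (Pq q kl.2 * Py q y kl.2))
      = y ^ N * z ^ N * q ^ (N ^ 2) / (Py q y N * Pq q N) := by
  rw [Finset.Nat.sum_antidiagonal_eq_sum_range_succ_mk]
  have hterm : ∀ k ∈ range (N+1),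
      (a q k * z ^ k) * (z ^ (N - k) / (Pq q (N - k) * Py q y (N - k)))
      = (z ^ N / (Pq q N * Py q y N)) *
        ((-1:ℂ) ^ k * q ^ (e k) * B q N k * (∏ i ∈ range k, (1 - y * q ^ (N - k + 1 + i)))) := by
    intro k hk
    have hkN : k ≤ N := Nat.lt_succ_iff.1 (mem_range.1 hk)
    have f1 : z ^ k * z ^ (N - k) = z ^ N := by
      rw [← pow_add]
      congr 1
      omega
    have f2 : Pq q N = B q N k * (Pq q k * Pq q (N - k)) := by
      rw [B, if_pos hkN, div_mul_cancel₀ _ (mul_ne_zero (Pq_ne_zero hq k) (Pq_ne_zero hq (N-k)))]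
    have f3 : Py q y N = Py q y (N - k) * (∏ i ∈ range k, (1 - y * q ^ (N - k + 1 + i))) := by
      have h := Py_split (q := q) (y := y) (N - k) k
      rwa [show N - k + k = N by omega] at h
    rw [a, f2, f3]
    have n1 := Pq_ne_zero hq k
    have n2 := Pq_ne_zero hq (N-k)
    have n3 := Py_ne_zero hq hy (N-k)
    have n4 := B_ne_zero hq hkN
    have n5 := T_ne_zero hq hy N k
    field_simp
    linear_combination q ^ e k * f1
  rw [Finset.sum_congr rfl hterm, ← Finset.mul_sum, key_id hq y N]
  rw [div_mul_eq_mul_div, mul_comm (Pq q N) (Py q y N)]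
  ring

theorem heine_main (hq : ‖q‖ < 1) (hz : ‖z‖ < 1) (hy : ‖y‖ < 1) :
    (∏' j : ℕ, (1 - z * q ^ j)) * (∑' n : ℕ, z ^ n / (Pq q n * Py q y n))
      = ∑' n : ℕ, y ^ n * z ^ n * q ^ (n ^ 2) / (Py q y n * Pq q n) := by
  have ha := summable_norm_a_mul_pow hq z
  have hb : Summable fun n : ℕ => ‖z ^ n / (Pq q n * Py q y n)‖ := by
    apply Summable.of_norm_bounded (g := fun n => (1 / (D q * D q)) * ‖z‖ ^ n)
    · exact (summable_geometric_of_lt_one (norm_nonneg z) hz).mul_left _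
    · intro n
      rw [norm_norm, norm_div, norm_mul, norm_pow]
      have h1 := D_le_norm_Pq hq n
      have h2 := D_le_norm_Py hq hy.le n
      have hD := D_pos q
      rw [div_le_iff₀ (by nlinarith)]
      have hzn : (0:ℝ) ≤ ‖z‖ ^ n := pow_nonneg (norm_nonneg z) n
      calc ‖z‖ ^ n = (1 / (D q * D q)) * ‖z‖ ^ n * (D q * D q) := by field_simp
      _ ≤ 1 / (D q * D q) * ‖z‖ ^ n * (‖Pq q n‖ * ‖Py q y n‖) := by
          apply mul_le_mul_of_nonneg_left ?_ (by positivity)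
          apply mul_le_mul h1 h2 hD.le (norm_nonneg _)
  rw [euler hq z hz, show S q z = ∑' k : ℕ, a q k * z ^ k from rfl,
    tsum_mul_tsum_eq_tsum_sum_antidiagonal_of_summable_norm ha hb]
  exact tsum_congr fun N => conv hq hy.le z N

end HeineAux

/-- `(z;q)_∞ Σ_{n≥0} z^n / ((q;q)_n (yq;q)_n) = Σ_{n≥0} y^n z^n q^{n²} / ((yq;q)_n (q;q)_n)`,
a limiting case of Heine's transformation. -/
theorem heine_limit (y z q : ℂ) (hq : ‖q‖ < 1) (hz : ‖z‖ < 1) (hy : ‖y‖ < 1) :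
    (∏' j : ℕ, (1 - z * q ^ j)) *
      (∑' n : ℕ, z ^ n /
        ((∏ j ∈ Finset.range n, (1 - q ^ (j + 1))) *
          ∏ j ∈ Finset.range n, (1 - y * q ^ (j + 1)))) =
      ∑' n : ℕ, y ^ n * z ^ n * q ^ (n ^ 2) /
        ((∏ j ∈ Finset.range n, (1 - y * q ^ (j + 1))) *
          ∏ j ∈ Finset.range n, (1 - q ^ (j + 1))) := by
  simpa only [HeineAux.Pq, HeineAux.Py] using HeineAux.heine_main hq hz hy
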